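/- arXiv:1209.4947 — 4 statements merged into one kernel-verified Lean document; each statement's English description precedes it below -/
import Mathlib

section
/- Let ξ be the measure on ℝ^{k+1} defined by ξ(A) = λ_k({u ∈ ℝ^k_+ : (u, S_Δ(u)) ∈ A}) and let {τ_r}_{r∈ℝ} be the family of measures τ_r(A) = d_k^{-1} λ_{k−1}(π(A ∩ ℍ_r)). Then for every Borel-measurable nonnegative function ψ : ℝ^{k+1} → ℝ, ∫_{ℝ^{k+1}} ψ(u,r) dξ(u,r) = ∫_ℝ ( ∫_{ℝ^k} ψ(u,r) dτ_r(u) ) dλ(r). -/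
open MeasureTheory ENNReal Set

noncomputable section

def stepLen {k : ℕ} (t : Fin (k + 1) → ℝ) (i : Fin k) : ℝ :=
  t i.succ - t i.castSucc

def Sdelta {k : ℕ} (t : Fin (k + 1) → ℝ) (u : Fin k → ℝ) : ℝ :=
  ∑ i, stepLen t i * u i

def Hset {k : ℕ} (t : Fin (k + 1) → ℝ) (r : ℝ) : Set (Fin k → ℝ) :=
  {v | (∀ i, 0 < v i) ∧ Sdelta t v = r}

def posOrthant (k : ℕ) : Set (Fin k → ℝ) :=
  {v | ∀ i, 0 < v i}

def projFirst {k : ℕ} (v : Fin k → ℝ) (i : Fin (k - 1)) : ℝ :=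
  v (Fin.castLE (Nat.sub_le k 1) i)

def dLast {k : ℕ} (hk : 0 < k) (t : Fin (k + 1) → ℝ) : ℝ :=
  stepLen t ⟨k - 1, Nat.sub_lt hk one_pos⟩

/-- The measure `ξ(A) = λ_k({u ∈ ℝ^k_+ : (u, S_Δ(u)) ∈ A})` on `ℝ^k × ℝ ≅ ℝ^{k+1}`. -/
def xiMeasure {k : ℕ} (t : Fin (k + 1) → ℝ) : Measure ((Fin k → ℝ) × ℝ) :=
  Measure.map (fun u => (u, Sdelta t u)) (volume.restrict (posOrthant k))

/-- for every Borel-measurable nonnegative `ψ : ℝ^{k+1} → ℝ`,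
`∫ ψ dξ = ∫_ℝ (∫_{ℝ^k} ψ(u,r) dτ_r(u)) dλ(r)`, where `{τ_r}` is the family of
measures `τ_r(A) = d_k⁻¹ λ_{k-1}(π(A ∩ ℍ_r))`. -/
theorem simple_random_densities_stmt4
    (k : ℕ) (hk : 0 < k) (t : Fin (k + 1) → ℝ) (ht : StrictMono t)
    (τ : ℝ → Measure (Fin k → ℝ))
    (hτ : ∀ r : ℝ, ∀ A : Set (Fin k → ℝ), MeasurableSet A →
      τ r A = ENNReal.ofReal (dLast hk t)⁻¹ * volume (projFirst '' (A ∩ Hset t r)))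
    (ψ : (Fin k → ℝ) × ℝ → ℝ) (hψ : Measurable ψ) (hψ0 : ∀ p, 0 ≤ ψ p) :
    ∫⁻ p, ENNReal.ofReal (ψ p) ∂(xiMeasure t) =
      ∫⁻ r : ℝ, (∫⁻ u, ENNReal.ofReal (ψ (u, r)) ∂(τ r)) ∂volume := by
  obtain ⟨m, rfl⟩ : ∃ m, k = m + 1 := ⟨k - 1, (Nat.succ_pred_eq_of_pos hk).symm⟩
  set d : ℝ := dLast hk t with hd_def
  have hd_last : d = stepLen t (Fin.last m) := rfl
  have hd_pos : 0 < d := by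
    have := ht (Fin.castSucc_lt_succ : (Fin.last m).castSucc < (Fin.last m).succ)
    simpa [hd_last, stepLen, sub_pos] using this
  have hd_ne : d ≠ 0 := ne_of_gt hd_pos
  -- the "partial sum" of the first m coordinates
  set c : (Fin m → ℝ) → ℝ := fun w => ∑ i : Fin m, stepLen t i.castSucc * w i with hc_def
  have hc_meas : Measurable c :=
    Finset.measurable_sum _ fun i _ => (measurable_pi_apply i).const_mul _
  -- decomposition of Sdelta
  have hS : ∀ v : Fin (m+1) → ℝ,
      Sdelta t v = c (fun i => v i.castSucc) + d * v (Fin.last m) := by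
    intro v
    rw [Sdelta, Fin.sum_univ_castSucc, hd_last]
  have hS_meas : Measurable (Sdelta t) := by
    unfold Sdelta
    exact Finset.measurable_sum _ fun i _ => (measurable_pi_apply i).const_mul _
  -- the section map
  set φ : ℝ → (Fin m → ℝ) → (Fin (m+1) → ℝ) :=
    fun r w => Fin.snoc w ((r - c w) / d) with hφ_def
  have hφ_cast : ∀ r w (i : Fin m), φ r w i.castSucc = w i := by
    intro r w i; simp [hφ_def]
  have hφ_init : ∀ r w, (fun i : Fin m => φ r w i.castSucc) = w := by
    intro r w; funext i; exact hφ_cast r w i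
  have hφ_last : ∀ r w, φ r w (Fin.last m) = (r - c w) / d := by
    intro r w; simp [hφ_def]
  have hφ_S : ∀ r w, Sdelta t (φ r w) = r := by
    intro r w
    rw [hS, hφ_init, hφ_last]
    field_simp
    ring
  have hφ_meas2 : Measurable (fun p : (Fin m → ℝ) × ℝ => φ p.2 p.1) := by
    apply measurable_pi_lambda
    intro j
    refine Fin.lastCases ?_ ?_ j
    · simpa [hφ_def] using
        ((measurable_snd.sub (hc_meas.comp measurable_fst)).div_const d)
    · intro i
      simpa [hφ_def, Function.comp_def] using (measurable_pi_apply i).comp (measurable_fst)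
  have hφ_meas : ∀ r, Measurable (φ r) :=
    fun r => hφ_meas2.comp (measurable_id.prodMk measurable_const)
  have horth : MeasurableSet (posOrthant (m+1)) := by
    have : posOrthant (m+1) = ⋂ i, {v : Fin (m+1) → ℝ | 0 < v i} := by
      ext v; simp [posOrthant, Set.mem_iInter]
    rw [this]
    exact MeasurableSet.iInter fun i => measurableSet_lt measurable_const (measurable_pi_apply i)
  -- reconstruction: a point of Hset t r is φ r of its projection
  have hrecon : ∀ r (v : Fin (m+1) → ℝ), Sdelta t v = r →
      φ r (fun i => v i.castSucc) = v := by
    intro r v hv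
    have hlast : v (Fin.last m) = (r - c (fun i => v i.castSucc)) / d := by
      rw [hS] at hv
      field_simp
      linarith
    funext j
    refine Fin.lastCases ?_ ?_ j
    · rw [hφ_last, hlast]
    · intro i; rw [hφ_cast]
  -- the key image identity
  have himage : ∀ r (A : Set (Fin (m+1) → ℝ)),
      projFirst '' (A ∩ Hset t r) = φ r ⁻¹' A ∩ φ r ⁻¹' (posOrthant (m+1)) := by
    intro r A
    ext w
    constructor
    · rintro ⟨v, ⟨hvA, hvpos, hvS⟩, rfl⟩
      have key : φ r (projFirst v) = v := hrecon r v hvS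
      exact Set.mem_inter (by rw [Set.mem_preimage, key]; exact hvA)
        (by rw [Set.mem_preimage, key]; exact hvpos)
    · rintro ⟨h1, h2⟩
      refine ⟨φ r w, ⟨h1, h2, hφ_S r w⟩, ?_⟩
      have hw : projFirst (φ r w) = fun i : Fin m => (φ r w) i.castSucc := rfl
      exact hw.trans (hφ_init r w)
  -- description of τ r as a measure
  have hτ' : ∀ r, τ r = (ENNReal.ofReal d⁻¹) •
      Measure.map (φ r) (volume.restrict (φ r ⁻¹' (posOrthant (m+1)))) := by
    intro r
    ext A hA
    rw [hτ r A hA, himage r A, Measure.smul_apply, smul_eq_mul,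
      Measure.map_apply (hφ_meas r) hA,
      Measure.restrict_apply ((hφ_meas r) hA)]
  -- the joint indicator function
  set G : (Fin (m+1) → ℝ) × ℝ → ℝ≥0∞ :=
    (posOrthant (m+1) ×ˢ (Set.univ : Set ℝ)).indicator (fun p => ENNReal.ofReal (ψ p))
    with hG_def
  have hG_meas : Measurable G :=
    (hψ.ennreal_ofReal).indicator (horth.prod MeasurableSet.univ)
  have hG_apply : ∀ (v : Fin (m+1) → ℝ) (r : ℝ),
      G (v, r) = (posOrthant (m+1)).indicator (fun v => ENNReal.ofReal (ψ (v, r))) v := by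
    intro v r
    by_cases h : v ∈ posOrthant (m+1) <;>
      simp [hG_def, Set.indicator_apply, h]
  -- RHS computation
  have hRHS : ∀ r, (∫⁻ u, ENNReal.ofReal (ψ (u, r)) ∂(τ r)) =
      ENNReal.ofReal d⁻¹ * ∫⁻ w, G (φ r w, r) ∂volume := by
    intro r
    have hm : Measurable fun u : Fin (m+1) → ℝ => ENNReal.ofReal (ψ (u, r)) :=
      Measurable.ennreal_ofReal (hψ.comp (measurable_id.prodMk measurable_const))
    rw [hτ' r, lintegral_smul_measure, lintegral_map hm (hφ_meas r)]
    congr 1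
    rw [← lintegral_indicator ((hφ_meas r) horth)]
    congr 1
    funext w
    rw [hG_apply]
    by_cases h : φ r w ∈ posOrthant (m+1) <;>
      simp [Set.indicator_apply, h]
  -- LHS computation
  have hxL : ∫⁻ p, ENNReal.ofReal (ψ p) ∂(xiMeasure t) =
      ∫⁻ v, G (v, Sdelta t v) ∂volume := by
    have hm2 : Measurable fun u : Fin (m+1) → ℝ => (u, Sdelta t u) :=
      measurable_id.prodMk hS_meas
    rw [xiMeasure, lintegral_map hψ.ennreal_ofReal hm2, ← lintegral_indicator horth]
    congr 1
    funext v
    by_cases h : v ∈ posOrthant (m+1) <;>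
      simp [hG_def, Set.indicator_apply, h]
  -- split off the last coordinate
  set e := MeasurableEquiv.piFinSuccAbove (fun _ : Fin (m+1) => ℝ) (Fin.last m) with he_def
  have he_symm : ∀ p : ℝ × (Fin m → ℝ), e.symm p = Fin.snoc p.2 p.1 := by
    intro p
    ext j
    simp [he_def, MeasurableEquiv.piFinSuccAbove_symm_apply, Fin.insertNth_last',
      Fin.snocEquiv_apply]
  have hmp : MeasurePreserving e.symm volume volume :=
    (volume_preserving_piFinSuccAbove (fun _ : Fin (m+1) => ℝ) (Fin.last m)).symm
  have hH_meas : Measurable (fun v => G (v, Sdelta t v)) :=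
    hG_meas.comp (measurable_id.prodMk hS_meas)
  have hsnoc_meas : Measurable (fun p : ℝ × (Fin m → ℝ) => (Fin.snoc p.2 p.1 : Fin (m+1) → ℝ)) := by
    have := e.symm.measurable
    convert this using 1
    funext p
    exact (he_symm p).symm
  have hPm : Measurable fun p : ℝ × (Fin m → ℝ) =>
      G (Fin.snoc p.2 p.1, Sdelta t (Fin.snoc p.2 p.1)) := hH_meas.comp hsnoc_meas
  have hstep1 : ∫⁻ v, G (v, Sdelta t v) ∂volume =
      ∫⁻ p : ℝ × (Fin m → ℝ), G (Fin.snoc p.2 p.1, Sdelta t (Fin.snoc p.2 p.1)) ∂volume := by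
    rw [← hmp.lintegral_comp hH_meas]
    congr 1
    funext p
    rw [he_symm]
  -- Sdelta of a snoc
  have hS_snoc : ∀ (w : Fin m → ℝ) (a : ℝ),
      Sdelta t (Fin.snoc w a) = c w + d * a := by
    intro w a
    rw [hS]
    have h1 : (fun i : Fin m => (Fin.snoc w a : Fin (m+1) → ℝ) i.castSucc) = w := by
      funext i; simp
    have h2 : (Fin.snoc w a : Fin (m+1) → ℝ) (Fin.last m) = a := by simp
    rw [h1, h2]
  -- the function appearing after slicing
  set K : (Fin m → ℝ) × ℝ → ℝ≥0∞ := fun p => G (φ p.2 p.1, p.2) with hK_def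
  have hK_meas : Measurable K :=
    hG_meas.comp (hφ_meas2.prodMk measurable_snd)
  have hsnoc_K : ∀ (w : Fin m → ℝ) (a : ℝ),
      G (Fin.snoc w a, Sdelta t (Fin.snoc w a)) = K (w, c w + d * a) := by
    intro w a
    rw [hS_snoc]
    have : φ (c w + d * a) w = Fin.snoc w a := by
      rw [hφ_def]
      beta_reduce
      rw [add_sub_cancel_left, mul_div_cancel_left₀ _ hd_ne]
    rw [hK_def]
    simp only
    rw [this]
  -- 1-dim change of variables
  have hmap : ∀ b : ℝ, Measure.map (fun a : ℝ => b + d * a) volume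
      = ENNReal.ofReal d⁻¹ • volume := by
    intro b
    have h1 : (fun a : ℝ => b + d * a) = (fun x => b + x) ∘ (fun a => d * a) := rfl
    rw [h1, ← Measure.map_map (measurable_const_add b) (measurable_const_mul d),
      Real.map_volume_mul_left hd_ne, Measure.map_smul, map_add_left_eq_self,
      abs_inv, abs_of_pos hd_pos]
  have hKw : ∀ w : Fin m → ℝ, Measurable (fun r => K (w, r)) :=
    fun w => hK_meas.comp (measurable_const.prodMk measurable_id)
  have hKr : ∀ r : ℝ, Measurable (fun w => K (w, r)) :=
    fun r => hK_meas.comp (measurable_id.prodMk measurable_const)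
  have hsub : ∀ w : Fin m → ℝ, ∫⁻ a, K (w, c w + d * a) ∂volume
      = ENNReal.ofReal d⁻¹ * ∫⁻ r, K (w, r) ∂volume := by
    intro w
    calc ∫⁻ a, K (w, c w + d * a) ∂volume
        = ∫⁻ r, K (w, r) ∂(Measure.map (fun a => c w + d * a) volume) := by
          rw [lintegral_map (hKw w) ((measurable_const_mul d).const_add (c w))]
      _ = ENNReal.ofReal d⁻¹ * ∫⁻ r, K (w, r) ∂volume := by
          rw [hmap (c w), lintegral_smul_measure, smul_eq_mul]
  -- main chain
  calc ∫⁻ p, ENNReal.ofReal (ψ p) ∂(xiMeasure t)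
      = ∫⁻ v, G (v, Sdelta t v) ∂volume := hxL
    _ = ∫⁻ p : ℝ × (Fin m → ℝ),
          G (Fin.snoc p.2 p.1, Sdelta t (Fin.snoc p.2 p.1)) ∂volume := hstep1
    _ = ∫⁻ a : ℝ, ∫⁻ w : Fin m → ℝ,
          G (Fin.snoc w a, Sdelta t (Fin.snoc w a)) ∂volume ∂volume := by
        rw [Measure.volume_eq_prod, lintegral_prod _ hPm.aemeasurable]
    _ = ∫⁻ w : Fin m → ℝ, ∫⁻ a : ℝ,
          G (Fin.snoc w a, Sdelta t (Fin.snoc w a)) ∂volume ∂volume :=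
        lintegral_lintegral_swap hPm.aemeasurable
    _ = ∫⁻ w : Fin m → ℝ, ∫⁻ a : ℝ, K (w, c w + d * a) ∂volume ∂volume := by
        apply lintegral_congr; intro w
        apply lintegral_congr; intro a
        exact hsnoc_K w a
    _ = ∫⁻ w : Fin m → ℝ, ENNReal.ofReal d⁻¹ * ∫⁻ r : ℝ, K (w, r) ∂volume ∂volume :=
        lintegral_congr fun w => hsub w
    _ = ∫⁻ w : Fin m → ℝ, ∫⁻ r : ℝ, ENNReal.ofReal d⁻¹ * K (w, r) ∂volume ∂volume := by
        apply lintegral_congr; intro w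
        rw [← lintegral_const_mul _ (hKw w)]
    _ = ∫⁻ r : ℝ, ∫⁻ w : Fin m → ℝ, ENNReal.ofReal d⁻¹ * K (w, r) ∂volume ∂volume :=
        lintegral_lintegral_swap ((hK_meas.const_mul _).aemeasurable)
    _ = ∫⁻ r : ℝ, ENNReal.ofReal d⁻¹ * ∫⁻ w : Fin m → ℝ, K (w, r) ∂volume ∂volume := by
        apply lintegral_congr; intro r
        rw [← lintegral_const_mul _ (hKr r)]
    _ = ∫⁻ r : ℝ, (∫⁻ u, ENNReal.ofReal (ψ (u, r)) ∂(τ r)) ∂volume := by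
        apply lintegral_congr; intro r
        exact (hRHS r).symm
end
end

section
/- Let U ~ L_k(m,Σ) with nonsingular Σ and density f_U, and let τ_r(A) = d_k^{-1} λ_{k−1}(π(A ∩ ℍ_r)). Then the distribution μ_{S_Δ(U)} of S_Δ(U) is absolutely continuous with respect to Lebesgue measure λ on ℝ, with Radon–Nikodym derivative f_{S_Δ(U)}(r) = ∫_{ℝ^k} f_U(u) 1_{ℍ_r}(u) dτ_r(u). -/
open MeasureTheory ENNReal Set Matrix

noncomputable section

/-- The lognormal density `f_U` of `U ~ L_k(m, Σ)` with respect to `λ_k`: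
`f_U(u) = (2π)^{-k/2} |Σ|^{-1/2} (∏ u_i⁻¹) exp(-½ (log u - m)ᵀ Sig⁻¹ (log u - m)) 1_{ℝ^k_+}(u)`. -/
def logNormalDensity {k : ℕ} (m : Fin k → ℝ) (Sig : Matrix (Fin k) (Fin k) ℝ)
    (u : Fin k → ℝ) : ℝ :=
  (posOrthant k).indicator
    (fun u =>
      (2 * Real.pi) ^ (-(k : ℝ) / 2) * Sig.det ^ (-(1 : ℝ) / 2) * (∏ i, (u i)⁻¹) *
        Real.exp (-(1 / 2) *
          (((fun i => Real.log (u i)) - m) ⬝ᵥ (Sig⁻¹ *ᵥ ((fun i => Real.log (u i)) - m))))) u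

/-- if `U ~ L_k(m,Σ)` with nonsingular `Σ`, the distribution of `S_Δ(U)` is
absolutely continuous w.r.t. Lebesgue measure on `ℝ`, with density
`f_{S_Δ(U)}(r) = ∫ f_U 1_{ℍ_r} dτ_r`. -/
theorem simple_random_densities_stmt6
    (k : ℕ) (hk : 0 < k) (t : Fin (k + 1) → ℝ) (ht : StrictMono t)
    (m : Fin k → ℝ) (Sig : Matrix (Fin k) (Fin k) ℝ) (hSig : Sig.PosDef)
    {Ω : Type*} [MeasurableSpace Ω] (P : Measure Ω) [IsProbabilityMeasure P]
    (U : Ω → Fin k → ℝ) (hU : Measurable U)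
    (hlaw : Measure.map U P = volume.withDensity fun u => ENNReal.ofReal (logNormalDensity m Sig u))
    (τ : ℝ → Measure (Fin k → ℝ))
    (hτ : ∀ r : ℝ, ∀ A : Set (Fin k → ℝ), MeasurableSet A →
      τ r A = ENNReal.ofReal (dLast hk t)⁻¹ * volume (projFirst '' (A ∩ Hset t r))) :
    Measure.map (fun ω => Sdelta t (U ω)) P ≪ (volume : Measure ℝ) ∧
    Measure.map (fun ω => Sdelta t (U ω)) P =
      volume.withDensity fun r =>
        ∫⁻ u, ENNReal.ofReal (logNormalDensity m Sig u) * (Hset t r).indicator 1 u ∂(τ r) := by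
  obtain ⟨n, rfl⟩ : ∃ n, k = n + 1 := ⟨k - 1, (Nat.succ_pred_eq_of_pos hk).symm⟩
  -- basic data
  set g' : (Fin (n + 1) → ℝ) → ℝ≥0∞ := fun u => ENNReal.ofReal (logNormalDensity m Sig u) with hg'
  have hd : ∀ i : Fin (n + 1), 0 < stepLen t i := fun i => sub_pos.2 (ht (show i.castSucc < i.succ from Fin.castSucc_lt_succ))
  have hdl0 : (0:ℝ) < dLast hk t := hd _
  set dl : ℝ := dLast hk t with hdl
  have hdlne : dl ≠ 0 := ne_of_gt hdl0
  set c : (Fin n → ℝ) → ℝ := fun w => ∑ j : Fin n, stepLen t j.castSucc * w j with hc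
  set ψ : ℝ → (Fin n → ℝ) → (Fin (n + 1) → ℝ) :=
    fun r w => Fin.snoc w ((r - c w) / dl) with hψ
  -- measurability facts
  have hposm : MeasurableSet (posOrthant (n + 1)) := by
    have : posOrthant (n + 1) = ⋂ i, {v : Fin (n + 1) → ℝ | 0 < v i} := by
      ext v; simp [posOrthant]
    rw [this]
    exact MeasurableSet.iInter fun i => measurableSet_lt measurable_const (measurable_pi_apply i)
  have hgm : Measurable g' := by
    refine ENNReal.measurable_ofReal.comp ?_
    unfold logNormalDensity
    refine Measurable.indicator ?_ hposm
    simp only [dotProduct, mulVec, Pi.sub_apply]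
    apply Measurable.mul
    · exact measurable_const.mul (Finset.measurable_prod _ fun i _ => (measurable_pi_apply i).inv)
    · apply Real.measurable_exp.comp
      apply Measurable.const_mul
      refine Finset.measurable_sum _ fun i _ => Measurable.mul ?_ ?_
      · exact (Real.measurable_log.comp (measurable_pi_apply i)).sub measurable_const
      · exact Finset.measurable_sum _ fun j _ =>
          ((Real.measurable_log.comp (measurable_pi_apply j)).sub measurable_const).const_mul _
  have hSmeas : Measurable (Sdelta t) := by
    unfold Sdelta; fun_prop
  have hcm : Measurable c := by fun_prop
  have hψm2 : Measurable fun p : (Fin n → ℝ) × ℝ => ψ p.2 p.1 := by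
    apply measurable_pi_lambda
    intro i
    induction i using Fin.lastCases with
    | last => simpa [hψ, Fin.snoc_last] using ((measurable_snd.sub (hcm.comp measurable_fst)).div_const dl)
    | cast j => simp [hψ, Fin.snoc_castSucc]; exact (measurable_pi_apply j).comp measurable_fst
  have hψm : ∀ r, Measurable (ψ r) := fun r =>
    hψm2.comp (measurable_id.prodMk measurable_const)
  -- algebraic facts
  have hSd : ∀ (w : Fin n → ℝ) (x : ℝ), Sdelta t (Fin.snoc w x) = c w + dl * x := by
    intro w x
    simp only [Sdelta, Fin.sum_univ_castSucc, Fin.snoc_castSucc, Fin.snoc_last]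
    rfl
  have hψSd : ∀ r w, Sdelta t (ψ r w) = r := by
    intro r w
    rw [hψ]; rw [hSd]; field_simp; ring
  have hprojψ : ∀ r w, projFirst (ψ r w) = w := by
    intro r w
    funext j
    show (ψ r w) (Fin.castSucc j) = w j
    simp [hψ, Fin.snoc_castSucc]
  have hψproj : ∀ (r : ℝ) (u : Fin (n + 1) → ℝ), Sdelta t u = r → ψ r (projFirst u) = u := by
    intro r u hu
    have hproj : projFirst u = fun j : Fin n => u j.castSucc := rfl
    funext i
    induction i using Fin.lastCases with
    | last =>
      show (ψ r (projFirst u)) (Fin.last n) = u (Fin.last n)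
      rw [hψ]
      simp only [Fin.snoc_last]
      rw [hproj]
      have : r = c (fun j : Fin n => u j.castSucc) + dl * u (Fin.last n) := by
        rw [← hu]
        simp only [Sdelta, Fin.sum_univ_castSucc, c]
        rfl
      rw [this]
      field_simp; ring
    | cast j =>
      show (ψ r (projFirst u)) (Fin.castSucc j) = u (Fin.castSucc j)
      rw [hψ]
      simp only [Fin.snoc_castSucc]
      rw [hproj]
  -- identification of tau
  set Pr : ℝ → Set (Fin n → ℝ) := fun r => ψ r ⁻¹' posOrthant (n + 1) with hPr
  have hPrm : ∀ r, MeasurableSet (Pr r) := fun r => (hψm r) hposm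
  have himg : ∀ (r : ℝ) (A : Set (Fin (n + 1) → ℝ)),
      projFirst '' (A ∩ Hset t r) = ψ r ⁻¹' A ∩ Pr r := by
    intro r A
    ext w
    constructor
    · rintro ⟨u, ⟨huA, hupos, huS⟩, rfl⟩
      have : ψ r (projFirst u) = u := hψproj r u huS
      constructor
      · rw [mem_preimage, this]; exact huA
      · rw [hPr, mem_preimage, this]; exact hupos
    · rintro ⟨hA, hP⟩
      refine ⟨ψ r w, ⟨hA, hP, hψSd r w⟩, hprojψ r w⟩
  have hHm : ∀ r, MeasurableSet (Hset t r) := fun r =>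
    (hposm.inter (hSmeas (measurableSet_singleton r)) : MeasurableSet _)
  have hτ' : ∀ r, τ r = ENNReal.ofReal dl⁻¹ • Measure.map (ψ r) (volume.restrict (Pr r)) := by
    intro r
    ext A hA
    rw [hτ r A hA, himg r A]
    rw [Measure.smul_apply, Measure.map_apply (hψm r) hA,
      Measure.restrict_apply ((hψm r) hA)]
    rfl
  -- the density function
  set I : ℝ → ℝ≥0∞ := fun r => ∫⁻ w, g' (ψ r w) with hI
  set F' : ℝ → ℝ≥0∞ := fun r => ENNReal.ofReal dl⁻¹ * I r with hF'
  -- RHS density equals F'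
  have hFeq : (fun r => ∫⁻ u, g' u * (Hset t r).indicator 1 u ∂(τ r)) = F' := by
    funext r
    rw [hτ' r, lintegral_smul_measure, smul_eq_mul,
      lintegral_map (f := fun u => g' u * (Hset t r).indicator 1 u) (hgm.mul (measurable_one.indicator (hHm r))) (hψm r)]
    show _ = ENNReal.ofReal dl⁻¹ * ∫⁻ w, g' (ψ r w)
    congr 1
    rw [← lintegral_indicator (hPrm r)]
    apply lintegral_congr
    intro w
    by_cases hw : w ∈ Pr r
    · rw [Set.indicator_of_mem hw,
        Set.indicator_of_mem (show ψ r w ∈ Hset t r from ⟨hw, hψSd r w⟩)]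
      simp
    · rw [Set.indicator_of_notMem hw]
      have hw' : ψ r w ∉ posOrthant (n + 1) := hw
      simp [hg', logNormalDensity, Set.indicator_of_notMem hw']
  -- main computation
  have hmain : Measure.map (Sdelta t) (volume.withDensity g') = volume.withDensity F' := by
    ext B hB
    rw [Measure.map_apply hSmeas hB, withDensity_apply _ (hSmeas hB), withDensity_apply _ hB,
      ← lintegral_indicator (hSmeas hB)]
    have hmp : MeasurePreserving
        (MeasurableEquiv.piFinSuccAbove (fun _ : Fin (n + 1) => ℝ) (Fin.last n)) volume volume :=
      volume_preserving_piFinSuccAbove _ _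
    set e := MeasurableEquiv.piFinSuccAbove (fun _ : Fin (n + 1) => ℝ) (Fin.last n) with he
    have hsymm : ∀ p : ℝ × (Fin n → ℝ), e.symm p = Fin.snoc p.2 p.1 := by
      intro p
      simp [he, MeasurableEquiv.piFinSuccAbove_symm_apply, Fin.insertNthEquiv,
        Fin.insertNth_last']
    have hindm : Measurable ((Sdelta t ⁻¹' B).indicator g') := hgm.indicator (hSmeas hB)
    have h1 : ∫⁻ u, (Sdelta t ⁻¹' B).indicator g' u
        = ∫⁻ p : ℝ × (Fin n → ℝ), (Sdelta t ⁻¹' B).indicator g' (e.symm p) := by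
      rw [← hmp.map_eq, lintegral_map_equiv]
      simp
    rw [h1]
    simp only [hsymm]
    rw [Measure.volume_eq_prod,
      lintegral_prod_symm _ (by
        have : Measurable fun p : ℝ × (Fin n → ℝ) => (Sdelta t ⁻¹' B).indicator g' (Fin.snoc p.2 p.1) := by
          simp only [fun p : ℝ × (Fin n → ℝ) => (hsymm p).symm]
          exact hindm.comp e.symm.measurable
        exact this.aemeasurable)]
    have h3 : ∀ w : Fin n → ℝ, (∫⁻ x, (Sdelta t ⁻¹' B).indicator g' (Fin.snoc w x))
        = ENNReal.ofReal dl⁻¹ * ∫⁻ s, (Sdelta t ⁻¹' B).indicator g' (ψ s w) := by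
      intro w
      have hφm : Measurable fun s => (Sdelta t ⁻¹' B).indicator g' (ψ s w) :=
        hindm.comp (hψm2.comp (measurable_const.prodMk measurable_id))
      have key : ∀ x : ℝ, Fin.snoc w x = ψ (c w + dl * x) w := by
        intro x
        rw [hψ]
        congr 1
        field_simp; ring
      have hmapeq : Measure.map (fun x : ℝ => c w + dl * x) volume
          = ENNReal.ofReal dl⁻¹ • volume := by
        have hcomp : (fun x : ℝ => c w + dl * x) = (fun y => c w + y) ∘ (fun x => dl * x) := rfl
        rw [hcomp, ← Measure.map_map (measurable_const_add _) (measurable_const_mul _),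
          Real.map_volume_mul_left hdlne, Measure.map_smul, map_add_left_eq_self _ _,
          abs_inv, abs_of_pos hdl0]
      calc (∫⁻ x, (Sdelta t ⁻¹' B).indicator g' (Fin.snoc w x))
          = ∫⁻ x, (Sdelta t ⁻¹' B).indicator g' (ψ (c w + dl * x) w) := by simp only [key]
        _ = ∫⁻ s, (Sdelta t ⁻¹' B).indicator g' (ψ s w)
              ∂(Measure.map (fun x : ℝ => c w + dl * x) volume) :=
            (lintegral_map hφm (by fun_prop)).symm
        _ = ENNReal.ofReal dl⁻¹ * ∫⁻ s, (Sdelta t ⁻¹' B).indicator g' (ψ s w) := by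
            rw [hmapeq, lintegral_smul_measure, smul_eq_mul]
    simp only [h3]
    rw [lintegral_const_mul' _ _ ofReal_ne_top]
    have hunc : Measurable (Function.uncurry fun (w : Fin n → ℝ) (s : ℝ) =>
        (Sdelta t ⁻¹' B).indicator g' (ψ s w)) := hindm.comp hψm2
    rw [lintegral_lintegral_swap hunc.aemeasurable]
    have hpt : ∀ (s : ℝ) (w : Fin n → ℝ),
        (Sdelta t ⁻¹' B).indicator g' (ψ s w) = B.indicator 1 s * g' (ψ s w) := by
      intro s w
      have hmem : ψ s w ∈ Sdelta t ⁻¹' B ↔ s ∈ B := by rw [Set.mem_preimage, hψSd]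
      by_cases h : s ∈ B
      · rw [Set.indicator_of_mem (hmem.2 h), Set.indicator_of_mem h]
        simp
      · rw [Set.indicator_of_notMem (fun hc => h (hmem.1 hc)),
          Set.indicator_of_notMem h]
        simp
    have h5 : ∀ s : ℝ, (∫⁻ w, (Sdelta t ⁻¹' B).indicator g' (ψ s w))
        = B.indicator (fun r => I r) s := by
      intro s
      rw [lintegral_congr (hpt s)]
      rw [lintegral_const_mul' _ _ (by by_cases h : s ∈ B <;> simp [h])]
      by_cases h : s ∈ B <;> simp [h, hI]
    rw [lintegral_congr h5, lintegral_indicator hB,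
      ← lintegral_const_mul' _ _ ofReal_ne_top]
  have hmap : Measure.map (fun ω => Sdelta t (U ω)) P = volume.withDensity F' := by
    have : (fun ω => Sdelta t (U ω)) = Sdelta t ∘ U := rfl
    rw [this, ← Measure.map_map hSmeas hU, hlaw, hmain]
  constructor
  · rw [hmap]; exact withDensity_absolutelyContinuous _ _
  · rw [hmap, hFeq]
end
end

section
/- Let U ~ L_k(m,Σ) with nonsingular Σ and density f_U, let f_{S_Δ(U)}(r) = ∫_{ℝ^k} f_U(u) 1_{ℍ_r}(u) dτ_r(u) be the density of S_Δ(U), and define the kernel μ_{U|S_Δ(U)}(A | r) = ∫_A (f_U(u)/f_{S_Δ(U)}(r)) 1_{ℍ_r}(u) dτ_r(u). Then μ_{U|S_Δ(U)} is a regular version of the conditional distribution of U given S_Δ(U): for all Borel A ⊆ ℝ^k and B ⊆ ℝ, P(U ∈ A, S_Δ(U) ∈ B) = ∫_B μ_{U|S_Δ(U)}(A | r) dμ_{S_Δ(U)}(r); moreover μ_{U|S_Δ(U)}(ℍ_r | r) = 1 for every r > 0. -/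
open MeasureTheory ENNReal Set Matrix

noncomputable section

/-- `f_{S_Δ(U)}(r) = ∫ f_U 1_{ℍ_r} dτ_r`, the density of `S_Δ(U)`. -/
def sDensity {k : ℕ} (t : Fin (k + 1) → ℝ) (m : Fin k → ℝ)
    (Sig : Matrix (Fin k) (Fin k) ℝ) (τ : ℝ → Measure (Fin k → ℝ)) (r : ℝ) : ℝ≥0∞ :=
  ∫⁻ u, ENNReal.ofReal (logNormalDensity m Sig u) * (Hset t r).indicator 1 u ∂(τ r)

/-- The kernel `μ_{U∣S_Δ(U)}(· ∣ r) = ∫_· (f_U / f_{S_Δ(U)}(r)) 1_{ℍ_r} dτ_r`. -/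
def condLaw {k : ℕ} (t : Fin (k + 1) → ℝ) (m : Fin k → ℝ)
    (Sig : Matrix (Fin k) (Fin k) ℝ) (τ : ℝ → Measure (Fin k → ℝ)) (r : ℝ) :
    Measure (Fin k → ℝ) :=
  (τ r).withDensity fun u =>
    (ENNReal.ofReal (logNormalDensity m Sig u) / sDensity t m Sig τ r) *
      (Hset t r).indicator 1 u

section AuxLemmas

lemma posOrthant_eq (k : ℕ) :
    posOrthant k = Set.univ.pi fun _ : Fin k => Set.Ioi (0 : ℝ) := by
  ext v; simp [posOrthant]

lemma isOpen_posOrthant (k : ℕ) : IsOpen (posOrthant k) := by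
  rw [posOrthant_eq]
  exact isOpen_set_pi Set.finite_univ fun _ _ => isOpen_Ioi

lemma measurableSet_posOrthant (k : ℕ) : MeasurableSet (posOrthant k) :=
  (isOpen_posOrthant k).measurableSet

lemma continuous_Sdelta {k : ℕ} (t : Fin (k + 1) → ℝ) : Continuous (Sdelta t) :=
  continuous_finset_sum _ fun i _ => continuous_const.mul (continuous_apply i)

lemma measurable_Sdelta {k : ℕ} (t : Fin (k + 1) → ℝ) : Measurable (Sdelta t) :=
  (continuous_Sdelta t).measurable

lemma measurableSet_Hset {k : ℕ} (t : Fin (k + 1) → ℝ) (r : ℝ) :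
    MeasurableSet (Hset t r) := by
  have h : Hset t r = posOrthant k ∩ Sdelta t ⁻¹' {r} := by
    ext v; simp [Hset, posOrthant, Set.mem_setOf_eq]
  rw [h]
  exact (measurableSet_posOrthant k).inter ((measurable_Sdelta t) (measurableSet_singleton r))

variable {n : ℕ}

lemma continuous_snocPair :
    Continuous (fun p : (Fin n → ℝ) × ℝ => (Fin.snoc p.1 p.2 : Fin (n + 1) → ℝ)) := by
  apply continuous_pi
  intro i
  induction i using Fin.lastCases with
  | last => simpa only [Fin.snoc_last] using continuous_snd
  | cast j => simp only [Fin.snoc_castSucc]; exact (continuous_apply j).comp continuous_fst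

def extMap (t : Fin (n + 1 + 1) → ℝ) (w : Fin n → ℝ) (r : ℝ) : Fin (n + 1) → ℝ :=
  Fin.snoc w ((r - ∑ i : Fin n, stepLen t i.castSucc * w i) / stepLen t (Fin.last n))

lemma continuous_extMap (t : Fin (n + 1 + 1) → ℝ) :
    Continuous (fun p : (Fin n → ℝ) × ℝ => extMap t p.1 p.2) := by
  unfold extMap
  exact continuous_snocPair.comp (continuous_fst.prodMk
    ((continuous_snd.sub (continuous_finset_sum _ fun i _ =>
      continuous_const.mul ((continuous_apply i).comp continuous_fst))).div_const _))

lemma Sdelta_extMap (t : Fin (n + 1 + 1) → ℝ) (hdl : stepLen t (Fin.last n) ≠ 0)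
    (w : Fin n → ℝ) (r : ℝ) : Sdelta t (extMap t w r) = r := by
  unfold Sdelta extMap
  rw [Fin.sum_univ_castSucc]
  simp only [Fin.snoc_castSucc, Fin.snoc_last]
  field_simp
  ring

lemma projFirst_eq (v : Fin (n + 1) → ℝ) : projFirst v = Fin.init v := rfl

lemma projFirst_extMap (t : Fin (n + 1 + 1) → ℝ) (w : Fin n → ℝ) (r : ℝ) :
    projFirst (extMap t w r) = w := by
  rw [projFirst_eq]; unfold extMap; exact Fin.init_snoc _ _

lemma extMap_projFirst (t : Fin (n + 1 + 1) → ℝ) (hdl : stepLen t (Fin.last n) ≠ 0)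
    {v : Fin (n + 1) → ℝ} {r : ℝ} (hv : v ∈ Hset t r) :
    extMap t (projFirst v) r = v := by
  rw [projFirst_eq]
  have hS : r = ∑ i : Fin n, stepLen t i.castSucc * v i.castSucc
      + stepLen t (Fin.last n) * v (Fin.last n) := by
    rw [← hv.2]; unfold Sdelta; rw [Fin.sum_univ_castSucc]
  unfold extMap
  have h2 : (r - ∑ i : Fin n, stepLen t i.castSucc * Fin.init v i)
      / stepLen t (Fin.last n) = v (Fin.last n) := by
    rw [hS]; simp only [Fin.init]; field_simp; ring
  rw [h2, Fin.snoc_init_self]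

lemma image_proj_inter (t : Fin (n + 1 + 1) → ℝ) (hdl : stepLen t (Fin.last n) ≠ 0)
    (A : Set (Fin (n + 1) → ℝ)) (r : ℝ) :
    projFirst '' (A ∩ Hset t r) = (fun w => extMap t w r) ⁻¹' (A ∩ posOrthant (n + 1)) := by
  ext w
  constructor
  · rintro ⟨v, ⟨hvA, hvH⟩, rfl⟩
    have h := extMap_projFirst t hdl hvH
    simp only [Set.mem_preimage, h]
    exact ⟨hvA, hvH.1⟩
  · rintro ⟨hA, hpos⟩
    exact ⟨extMap t w r, ⟨hA, ⟨hpos, Sdelta_extMap t hdl w r⟩⟩, projFirst_extMap t w r⟩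

end AuxLemmas

section AuxLemmas2

lemma lintegral_comp_affine {c : ℝ} (hc : c ≠ 0) (b : ℝ) {φ : ℝ → ℝ≥0∞} (hφ : Measurable φ) :
    ∫⁻ r, φ (c * r + b) = ENNReal.ofReal |c⁻¹| * ∫⁻ x, φ x := by
  have hmap : Measure.map (fun r : ℝ => c * r + b) volume = ENNReal.ofReal |c⁻¹| • volume := by
    have h1 : (fun r : ℝ => c * r + b) = (fun x : ℝ => x + b) ∘ (fun r : ℝ => c * r) := rfl
    rw [h1, ← Measure.map_map (measurable_add_const b) (measurable_const_mul c),
      Real.map_volume_mul_left hc, Measure.map_smul,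
      map_add_right_eq_self volume b]
  calc ∫⁻ r, φ (c * r + b)
      = ∫⁻ x, φ x ∂(Measure.map (fun r : ℝ => c * r + b) volume) :=
        (lintegral_map hφ ((measurable_const_mul c).add_const b)).symm
    _ = ENNReal.ofReal |c⁻¹| * ∫⁻ x, φ x := by rw [hmap, lintegral_smul_measure, smul_eq_mul]

variable {n : ℕ}

lemma master_change (t : Fin (n + 1 + 1) → ℝ) (hdl : 0 < stepLen t (Fin.last n))
    {h : (Fin (n + 1) → ℝ) → ℝ≥0∞} (hh : Measurable h) :
    ∫⁻ v, h v = ∫⁻ r : ℝ,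
      ENNReal.ofReal (stepLen t (Fin.last n))⁻¹ * ∫⁻ w, h (extMap t w r) ∂volume ∂volume := by
  set dl := stepLen t (Fin.last n) with hdl_def
  set cE : ℝ≥0∞ := ENNReal.ofReal dl⁻¹ with hcE
  have hmp := (volume_preserving_piFinSuccAbove (fun _ : Fin (n + 1) => ℝ) (Fin.last n)).symm
  have h1 : ∫⁻ v, h v = ∫⁻ p : ℝ × (Fin n → ℝ), h (Fin.snoc p.2 p.1) ∂volume := by
    rw [← hmp.lintegral_comp hh]
    refine lintegral_congr fun p => ?_
    congr 1
    show (MeasurableEquiv.piFinSuccAbove (fun _ : Fin (n + 1) => ℝ) (Fin.last n)).symm p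
      = Fin.snoc p.2 p.1
    simp [MeasurableEquiv.piFinSuccAbove, Fin.insertNth_last', Fin.snocEquiv]
  have hmeas2 : Measurable fun p : ℝ × (Fin n → ℝ) => h (Fin.snoc p.2 p.1) :=
    hh.comp (continuous_snocPair.measurable.comp (measurable_snd.prodMk measurable_fst))
  have h2 : ∫⁻ p : ℝ × (Fin n → ℝ), h (Fin.snoc p.2 p.1) ∂volume
      = ∫⁻ w, ∫⁻ x, h (Fin.snoc w x) ∂volume ∂volume := by
    rw [Measure.volume_eq_prod, lintegral_prod_symm _ hmeas2.aemeasurable]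
  have h3 : ∀ w : Fin n → ℝ, ∫⁻ x, h (Fin.snoc w x) ∂volume
      = cE * ∫⁻ r, h (extMap t w r) ∂volume := by
    intro w
    have hφ : Measurable fun x : ℝ => h (Fin.snoc w x) :=
      hh.comp (continuous_snocPair.measurable.comp (measurable_const.prodMk measurable_id))
    set b : ℝ := -((∑ i : Fin n, stepLen t i.castSucc * w i) / dl) with hb
    have harg : ∀ r : ℝ, dl⁻¹ * r + b
        = (r - ∑ i : Fin n, stepLen t i.castSucc * w i) / stepLen t (Fin.last n) := by
      intro r
      rw [hb, ← hdl_def]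
      field_simp
      ring
    have heq : (fun r : ℝ => h (extMap t w r)) = fun r => h (Fin.snoc w (dl⁻¹ * r + b)) := by
      funext r
      show h (Fin.snoc w ((r - ∑ i : Fin n, stepLen t i.castSucc * w i) / stepLen t (Fin.last n)))
        = h (Fin.snoc w (dl⁻¹ * r + b))
      rw [harg r]
    rw [heq, lintegral_comp_affine (inv_ne_zero hdl.ne') b hφ, inv_inv, abs_of_pos hdl,
      ← mul_assoc, hcE, ← ENNReal.ofReal_mul (by positivity), inv_mul_cancel₀ hdl.ne',
      ENNReal.ofReal_one, one_mul]
  have hmeasF : Measurable fun p : (Fin n → ℝ) × ℝ => cE * h (extMap t p.1 p.2) :=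
    ((hh.comp (continuous_extMap t).measurable)).const_mul cE
  have hm1 : ∀ w : Fin n → ℝ, Measurable fun r : ℝ => h (extMap t w r) := fun w =>
    hh.comp ((continuous_extMap t).measurable.comp (measurable_const.prodMk measurable_id))
  have hm2 : ∀ r : ℝ, Measurable fun w : Fin n → ℝ => h (extMap t w r) := fun r =>
    hh.comp ((continuous_extMap t).measurable.comp (measurable_id.prodMk measurable_const))
  calc ∫⁻ v, h v = ∫⁻ w, ∫⁻ x, h (Fin.snoc w x) ∂volume ∂volume := by rw [h1, h2]
    _ = ∫⁻ w, ∫⁻ r, cE * h (extMap t w r) ∂volume ∂volume := by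
        refine lintegral_congr fun w => ?_
        rw [h3 w, lintegral_const_mul cE (hm1 w)]
    _ = ∫⁻ r, ∫⁻ w, cE * h (extMap t w r) ∂volume ∂volume :=
        lintegral_lintegral_swap hmeasF.aemeasurable
    _ = ∫⁻ r, cE * ∫⁻ w, h (extMap t w r) ∂volume ∂volume := by
        refine lintegral_congr fun r => ?_
        rw [lintegral_const_mul cE (hm2 r)]

end AuxLemmas2

section AuxLemmas3

lemma measurable_logNormalDensity {k : ℕ} (m : Fin k → ℝ) (Sig : Matrix (Fin k) (Fin k) ℝ) :
    Measurable (logNormalDensity m Sig) := by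
  unfold logNormalDensity
  apply Measurable.indicator _ (measurableSet_posOrthant k)
  apply Measurable.mul
  · exact measurable_const.mul (Finset.measurable_prod _ fun i _ => (measurable_pi_apply i).inv)
  · apply Real.measurable_exp.comp
    apply Measurable.const_mul
    simp only [dotProduct, Matrix.mulVec, Pi.sub_apply]
    apply Finset.measurable_sum
    intro i _
    apply Measurable.mul
    · exact (Real.measurable_log.comp (measurable_pi_apply i)).sub measurable_const
    · apply Finset.measurable_sum
      intro j _
      exact measurable_const.mul
        ((Real.measurable_log.comp (measurable_pi_apply j)).sub measurable_const)

lemma logNormalDensity_pos {k : ℕ} (m : Fin k → ℝ) (Sig : Matrix (Fin k) (Fin k) ℝ)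
    (hSig : Sig.PosDef) {u : Fin k → ℝ} (hu : u ∈ posOrthant k) :
    0 < logNormalDensity m Sig u := by
  unfold logNormalDensity
  rw [Set.indicator_of_mem hu]
  have h1 : 0 < (2 * Real.pi) ^ (-(k : ℝ) / 2) :=
    Real.rpow_pos_of_pos (by positivity) _
  have h2 : (0 : ℝ) < Sig.det ^ (-(1 : ℝ) / 2) := Real.rpow_pos_of_pos hSig.det_pos _
  have h3 : 0 < ∏ i, (u i)⁻¹ := Finset.prod_pos fun i _ => inv_pos.mpr (hu i)
  positivity

lemma logNormalDensity_bound {k : ℕ} (hk : 0 < k) (m : Fin k → ℝ)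
    (Sig : Matrix (Fin k) (Fin k) ℝ) (hSig : Sig.PosDef) :
    ∃ C : ℝ, 0 ≤ C ∧ ∀ u, logNormalDensity m Sig u ≤ C := by
  haveI : Nonempty (Fin k) := ⟨⟨0, hk⟩⟩
  have hM : (Sig⁻¹).PosDef := hSig.inv
  set Q : (Fin k → ℝ) → ℝ := fun x => x ⬝ᵥ (Sig⁻¹ *ᵥ x) with hQ
  have hQcont : Continuous Q := by
    simp only [hQ, dotProduct, Matrix.mulVec]
    exact continuous_finset_sum _ fun i _ => (continuous_apply i).mul
      (continuous_finset_sum _ fun j _ => continuous_const.mul (continuous_apply j))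
  have hQpos : ∀ x : Fin k → ℝ, x ≠ 0 → 0 < Q x := by
    intro x hx
    simpa [hQ] using hM.dotProduct_mulVec_pos hx
  have hsne : (Metric.sphere (0 : Fin k → ℝ) 1).Nonempty := by
    refine ⟨fun _ => 1, ?_⟩
    simp [Metric.mem_sphere, dist_zero_right]
  obtain ⟨z, hzS, hz⟩ :=
    (isCompact_sphere (0 : Fin k → ℝ) 1).exists_isMinOn hsne hQcont.continuousOn
  have hz1 : ‖z‖ = 1 := mem_sphere_zero_iff_norm.mp hzS
  set ε := Q z with hε
  have hεpos : 0 < ε := hQpos z (by intro h; rw [h] at hz1; simp at hz1)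
  have key : ∀ x : Fin k → ℝ, ε * ‖x‖ ^ 2 ≤ Q x := by
    intro x
    rcases eq_or_ne x 0 with rfl | hx
    · simp [hQ]
    · have hxn : 0 < ‖x‖ := norm_pos_iff.mpr hx
      have hyS : ‖x‖⁻¹ • x ∈ Metric.sphere (0 : Fin k → ℝ) 1 := by
        simp [mem_sphere_zero_iff_norm, norm_smul, abs_of_pos (inv_pos.mpr hxn),
          inv_mul_cancel₀ hxn.ne']
      have hle : ε ≤ Q (‖x‖⁻¹ • x) := hz hyS
      have hsmul : Q (‖x‖⁻¹ • x) = ‖x‖⁻¹ * (‖x‖⁻¹ * Q x) := by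
        simp [hQ, Matrix.mulVec_smul, smul_dotProduct, dotProduct_smul,
          smul_eq_mul]
      rw [hsmul] at hle
      have h2 := mul_le_mul_of_nonneg_left hle (sq_nonneg ‖x‖)
      calc ε * ‖x‖ ^ 2 = ‖x‖ ^ 2 * ε := by ring
        _ ≤ ‖x‖ ^ 2 * (‖x‖⁻¹ * (‖x‖⁻¹ * Q x)) := h2
        _ = Q x := by field_simp
  set c₀ := (2 * Real.pi) ^ (-(k : ℝ) / 2) * Sig.det ^ (-(1 : ℝ) / 2) with hc₀
  have hc₀pos : 0 < c₀ :=
    mul_pos (Real.rpow_pos_of_pos (by positivity) _) (Real.rpow_pos_of_pos hSig.det_pos _)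
  refine ⟨c₀ * Real.exp (-(∑ i, m i) + (k : ℝ) ^ 2 / (2 * ε)), by positivity, ?_⟩
  intro u
  unfold logNormalDensity
  by_cases hu : u ∈ posOrthant k
  · rw [Set.indicator_of_mem hu]
    set x : Fin k → ℝ := (fun i => Real.log (u i)) - m with hx
    have hprod : ∏ i, (u i)⁻¹ = Real.exp (∑ i, -(x i + m i)) := by
      rw [Real.exp_sum]
      refine Finset.prod_congr rfl fun i _ => ?_
      have hui : 0 < u i := hu i
      have hxi : -(x i + m i) = -Real.log (u i) := by simp [hx]
      rw [hxi, ← Real.log_inv, Real.exp_log (inv_pos.mpr hui)]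
    have hQx : ((fun i => Real.log (u i)) - m) ⬝ᵥ (Sig⁻¹ *ᵥ ((fun i => Real.log (u i)) - m))
        = Q x := by rw [hQ, hx]
    rw [hQx, ← hc₀, hprod, mul_assoc, ← Real.exp_add]
    apply mul_le_mul_of_nonneg_left _ hc₀pos.le
    apply Real.exp_le_exp.mpr
    have hsum : ∑ i, -(x i + m i) = -(∑ i, x i) - ∑ i, m i := by
      simp only [neg_add, Finset.sum_add_distrib, Finset.sum_neg_distrib]
      ring
    have habs : -(∑ i, x i) ≤ (k : ℝ) * ‖x‖ := by
      calc -(∑ i, x i) ≤ |∑ i, x i| := neg_le_abs _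
        _ ≤ ∑ i, |x i| := Finset.abs_sum_le_sum_abs _ _
        _ ≤ ∑ _i : Fin k, ‖x‖ := Finset.sum_le_sum fun i _ => by
            simpa [Real.norm_eq_abs] using norm_le_pi_norm x i
        _ = (k : ℝ) * ‖x‖ := by
            simp [Finset.sum_const, Finset.card_univ, nsmul_eq_mul]
    have hq := key x
    have h5 : (k : ℝ) * ‖x‖ - ε * ‖x‖ ^ 2 / 2 ≤ (k : ℝ) ^ 2 / (2 * ε) := by
      rw [le_div_iff₀ (by positivity)]
      nlinarith [sq_nonneg (ε * ‖x‖ - (k : ℝ)), hεpos]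
    rw [hsum]
    linarith
  · rw [Set.indicator_of_notMem hu]
    positivity

end AuxLemmas3

/-- `μ_{U∣S_Δ(U)}` is a regular version of the conditional distribution of `U`
given `S_Δ(U)`: for all Borel `A ⊆ ℝ^k` and `B ⊆ ℝ`,
`P(U ∈ A, S_Δ(U) ∈ B) = ∫_B μ_{U∣S_Δ(U)}(A ∣ r) dμ_{S_Δ(U)}(r)`;
moreover `μ_{U∣S_Δ(U)}(ℍ_r ∣ r) = 1` for every `r > 0`. -/
theorem simple_random_densities_stmt7
    (k : ℕ) (hk : 0 < k) (t : Fin (k + 1) → ℝ) (ht : StrictMono t)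
    (m : Fin k → ℝ) (Sig : Matrix (Fin k) (Fin k) ℝ) (hSig : Sig.PosDef)
    {Ω : Type*} [MeasurableSpace Ω] (P : Measure Ω) [IsProbabilityMeasure P]
    (U : Ω → Fin k → ℝ) (hU : Measurable U)
    (hlaw : Measure.map U P = volume.withDensity fun u => ENNReal.ofReal (logNormalDensity m Sig u))
    (τ : ℝ → Measure (Fin k → ℝ))
    (hτ : ∀ r : ℝ, ∀ A : Set (Fin k → ℝ), MeasurableSet A →
      τ r A = ENNReal.ofReal (dLast hk t)⁻¹ * volume (projFirst '' (A ∩ Hset t r))) :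
    (∀ (A : Set (Fin k → ℝ)) (B : Set ℝ), MeasurableSet A → MeasurableSet B →
      Measure.map (fun ω => (U ω, Sdelta t (U ω))) P (A ×ˢ B) =
        ∫⁻ r in B, condLaw t m Sig τ r A ∂(Measure.map (fun ω => Sdelta t (U ω)) P)) ∧
    (∀ r : ℝ, 0 < r → condLaw t m Sig τ r (Hset t r) = 1) := by
  obtain ⟨n, rfl⟩ := Nat.exists_eq_succ_of_ne_zero hk.ne'
  have hd : ∀ i : Fin (n + 1), 0 < stepLen t i :=
    fun i => sub_pos.mpr (ht (Fin.castSucc_lt_succ : i.castSucc < i.succ))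
  have hdl : 0 < stepLen t (Fin.last n) := hd _
  set f : (Fin (n + 1) → ℝ) → ℝ≥0∞ := fun u => ENNReal.ofReal (logNormalDensity m Sig u)
    with hf_def
  have hfmeas : Measurable f := (measurable_logNormalDensity m Sig).ennreal_ofReal
  have hf0 : ∀ u, u ∉ posOrthant (n + 1) → f u = 0 := by
    intro u hu
    simp [hf_def, logNormalDensity, Set.indicator_of_notMem hu]
  have hdLast : dLast hk t = stepLen t (Fin.last n) := rfl
  set c : ℝ≥0∞ := ENNReal.ofReal (stepLen t (Fin.last n))⁻¹ with hc_def
  have hext_meas : Measurable (fun p : (Fin n → ℝ) × ℝ => extMap t p.1 p.2) :=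
    (continuous_extMap t).measurable
  have hextr : ∀ r, Measurable (fun w => extMap t w r) :=
    fun r => hext_meas.comp (measurable_id.prodMk measurable_const)
  set Pre : ℝ → Set (Fin n → ℝ) := fun r => (fun w => extMap t w r) ⁻¹' posOrthant (n + 1)
    with hPre_def
  have hPre_meas : ∀ r, MeasurableSet (Pre r) := fun r => (hextr r) (measurableSet_posOrthant _)
  -- τ as an explicit mapped measure
  have htau : ∀ r, τ r = c • Measure.map (fun w => extMap t w r) (volume.restrict (Pre r)) := by
    intro r
    refine Measure.ext fun A hA => ?_
    rw [hτ r A hA, image_proj_inter t hdl.ne' A r, Measure.smul_apply, smul_eq_mul,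
      Measure.map_apply (hextr r) hA, Measure.restrict_apply ((hextr r) hA),
      Set.preimage_inter]
    rfl
  have htau_lint : ∀ (r : ℝ) (g : (Fin (n + 1) → ℝ) → ℝ≥0∞), Measurable g →
      ∫⁻ u, g u ∂(τ r) = c * ∫⁻ w in Pre r, g (extMap t w r) ∂volume := by
    intro r g hg
    rw [htau r, lintegral_smul_measure, lintegral_map hg (hextr r), smul_eq_mul]
  -- replace set integrals on `Pre r` by full integrals for functions vanishing off the orthant
  have hfull : ∀ (r : ℝ) (g : (Fin (n + 1) → ℝ) → ℝ≥0∞),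
      (∀ u, u ∉ posOrthant (n + 1) → g u = 0) →
      ∫⁻ w in Pre r, g (extMap t w r) ∂volume = ∫⁻ w, g (extMap t w r) ∂volume := by
    intro r g hg0
    rw [← lintegral_indicator (hPre_meas r)]
    refine lintegral_congr fun w => ?_
    by_cases hw : w ∈ Pre r
    · rw [Set.indicator_of_mem hw]
    · rw [Set.indicator_of_notMem hw, hg0 _ hw]
  set ρ : Set (Fin (n + 1) → ℝ) → ℝ → ℝ≥0∞ :=
    fun A r => c * ∫⁻ w, A.indicator f (extMap t w r) ∂volume with hρ_def
  have hind0 : ∀ (A : Set (Fin (n + 1) → ℝ)) u, u ∉ posOrthant (n + 1) →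
      A.indicator f u = 0 := by
    intro A u hu
    by_cases h : u ∈ A
    · rw [Set.indicator_of_mem h, hf0 u hu]
    · rw [Set.indicator_of_notMem h]
  have hindmeas : ∀ A : Set (Fin (n + 1) → ℝ), MeasurableSet A → Measurable (A.indicator f) :=
    fun A hA => hfmeas.indicator hA
  -- sDensity = ρ univ
  have hs_eq : ∀ r, sDensity t m Sig τ r = ρ Set.univ r := by
    intro r
    unfold sDensity
    show ∫⁻ u, f u * (Hset t r).indicator 1 u ∂(τ r) = _
    rw [htau_lint r (fun u => f u * (Hset t r).indicator 1 u) (hfmeas.mul (measurable_one.indicator (measurableSet_Hset t r)))]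
    have hpt : ∀ w ∈ Pre r,
        f (extMap t w r) * (Hset t r).indicator 1 (extMap t w r)
          = Set.univ.indicator f (extMap t w r) := by
      intro w hw
      have hH : extMap t w r ∈ Hset t r := ⟨hw, Sdelta_extMap t hdl.ne' w r⟩
      rw [Set.indicator_of_mem hH, Pi.one_apply, mul_one, Set.indicator_univ]
    rw [setLIntegral_congr_fun (hPre_meas r) hpt,
      hfull r _ (hind0 Set.univ)]
  have hρmeas : ∀ A : Set (Fin (n + 1) → ℝ), MeasurableSet A → Measurable (ρ A) := by
    intro A hA
    apply Measurable.const_mul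
    have hm : Measurable fun p : ℝ × (Fin n → ℝ) => A.indicator f (extMap t p.2 p.1) :=
      (hindmeas A hA).comp (hext_meas.comp (measurable_snd.prodMk measurable_fst))
    exact hm.lintegral_prod_right'
  have hsmeas : Measurable (sDensity t m Sig τ) := by
    have hfeq : sDensity t m Sig τ = ρ Set.univ := funext hs_eq
    rw [hfeq]
    exact hρmeas _ MeasurableSet.univ
  have hSmeas : Measurable (Sdelta t) := measurable_Sdelta t
  -- the core identity
  have hmain : ∀ (A : Set (Fin (n + 1) → ℝ)) (B : Set ℝ), MeasurableSet A → MeasurableSet B →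
      (volume.withDensity f) (A ∩ Sdelta t ⁻¹' B) = ∫⁻ r in B, ρ A r ∂volume := by
    intro A B hA hB
    have hC : MeasurableSet (A ∩ Sdelta t ⁻¹' B) := hA.inter (hSmeas hB)
    rw [withDensity_apply _ hC, ← lintegral_indicator hC,
      master_change t hdl (hindmeas _ hC), ← lintegral_indicator hB]
    refine lintegral_congr fun r => ?_
    by_cases hr : r ∈ B
    · rw [Set.indicator_of_mem hr]
      show c * ∫⁻ w, (A ∩ Sdelta t ⁻¹' B).indicator f (extMap t w r) ∂volume = ρ A r
      simp only [hρ_def]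
      congr 1
      refine lintegral_congr fun w => ?_
      by_cases hw : extMap t w r ∈ A
      · have hmem : extMap t w r ∈ A ∩ Sdelta t ⁻¹' B :=
          ⟨hw, by simp [Set.mem_preimage, Sdelta_extMap t hdl.ne', hr]⟩
        rw [Set.indicator_of_mem hmem, Set.indicator_of_mem hw]
      · rw [Set.indicator_of_notMem (fun h => hw h.1), Set.indicator_of_notMem hw]
    · rw [Set.indicator_of_notMem hr]
      have hz : ∀ w : Fin n → ℝ, (A ∩ Sdelta t ⁻¹' B).indicator f (extMap t w r) = 0 := by
        intro w
        apply Set.indicator_of_notMem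
        rintro ⟨-, h2⟩
        rw [Set.mem_preimage, Sdelta_extMap t hdl.ne'] at h2
        exact hr h2
      simp only [hz, lintegral_zero, mul_zero]
  -- finiteness of sDensity
  have hsfin : ∀ r, sDensity t m Sig τ r ≠ ∞ := by
    intro r
    obtain ⟨C, hC0, hC⟩ := logNormalDensity_bound (Nat.succ_pos n) m Sig hSig
    rw [hs_eq r]
    simp only [hρ_def, Set.indicator_univ]
    rw [← hfull r f hf0]
    refine ENNReal.mul_ne_top ENNReal.ofReal_ne_top ?_
    have hbox : Pre r ⊆ Set.univ.pi fun i : Fin n => Set.Ioo 0 (r / stepLen t i.castSucc) := by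
      intro w hw
      have hpos : ∀ j, 0 < extMap t w r j := hw
      have hwi : ∀ i : Fin n, 0 < w i := by
        intro i
        have h := hpos i.castSucc
        rwa [show extMap t w r i.castSucc = w i from by
          unfold extMap; rw [Fin.snoc_castSucc]] at h
      have hlast := hpos (Fin.last n)
      rw [show extMap t w r (Fin.last n)
          = (r - ∑ i : Fin n, stepLen t i.castSucc * w i) / stepLen t (Fin.last n) from by
        unfold extMap; rw [Fin.snoc_last]] at hlast
      have hsum : ∑ i : Fin n, stepLen t i.castSucc * w i < r := by
        have hmul := mul_pos hlast hdl
        rw [div_mul_cancel₀ _ hdl.ne'] at hmul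
        linarith
      intro i _
      refine ⟨hwi i, ?_⟩
      rw [lt_div_iff₀ (hd i.castSucc)]
      have hone : stepLen t i.castSucc * w i ≤ ∑ j : Fin n, stepLen t j.castSucc * w j :=
        Finset.single_le_sum (f := fun j : Fin n => stepLen t j.castSucc * w j)
          (fun j _ => (mul_pos (hd _) (hwi j)).le) (Finset.mem_univ i)
      nlinarith
    have hfin2 : volume (Set.univ.pi fun i : Fin n => Set.Ioo 0 (r / stepLen t i.castSucc)) ≠ ∞ := by
      rw [volume_pi_pi]
      exact (ENNReal.prod_lt_top fun i _ => by rw [Real.volume_Ioo]; exact ENNReal.ofReal_lt_top).ne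
    have hle : ∫⁻ w in Pre r, f (extMap t w r) ∂volume ≤ ENNReal.ofReal C * volume (Pre r) := by
      calc ∫⁻ w in Pre r, f (extMap t w r) ∂volume
          ≤ ∫⁻ _ in Pre r, ENNReal.ofReal C ∂volume :=
            lintegral_mono fun w => ENNReal.ofReal_le_ofReal (hC _)
        _ = ENNReal.ofReal C * volume (Pre r) := setLIntegral_const _ _
    refine ne_top_of_le_ne_top ?_ hle
    exact ENNReal.mul_ne_top ENNReal.ofReal_ne_top
      (ne_top_of_le_ne_top hfin2 (measure_mono hbox))
  -- positivity of sDensity for r > 0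
  have hspos : ∀ r : ℝ, 0 < r → sDensity t m Sig τ r ≠ 0 := by
    intro r hr
    rw [hs_eq r]
    simp only [hρ_def, Set.indicator_univ]
    apply mul_ne_zero
    · simp [hc_def, ENNReal.ofReal_eq_zero, not_le, inv_pos, hdl]
    · rw [← hfull r f hf0]
      have hcont : Continuous fun w => extMap t w r :=
        (continuous_extMap t).comp (continuous_id.prodMk continuous_const)
      have hopen : IsOpen (Pre r) := (isOpen_posOrthant (n + 1)).preimage hcont
      have hne : (Pre r).Nonempty := by
        set D := ∑ i : Fin n, stepLen t i.castSucc with hD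
        have hD0 : 0 ≤ D := Finset.sum_nonneg fun i _ => (hd _).le
        have hden : 0 < D + stepLen t (Fin.last n) := by linarith
        set cc := r / (D + stepLen t (Fin.last n)) with hcc
        have hccpos : 0 < cc := div_pos hr hden
        refine ⟨fun _ => cc, ?_⟩
        show extMap t (fun _ => cc) r ∈ posOrthant (n + 1)
        intro j
        induction j using Fin.lastCases with
        | last =>
          rw [show extMap t (fun _ => cc) r (Fin.last n)
              = (r - ∑ i : Fin n, stepLen t i.castSucc * cc) / stepLen t (Fin.last n) from by
            unfold extMap; rw [Fin.snoc_last]]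
          have hsum : ∑ i : Fin n, stepLen t i.castSucc * cc = D * cc := by
            rw [hD, Finset.sum_mul]
          rw [hsum]
          have hnum : r - D * cc = r * stepLen t (Fin.last n) / (D + stepLen t (Fin.last n)) := by
            rw [hcc]; field_simp; ring
          rw [hnum]
          positivity
        | cast i =>
          rw [show extMap t (fun _ => cc) r i.castSucc = cc from by
            unfold extMap; rw [Fin.snoc_castSucc]]
          exact hccpos
      have hposvol : 0 < volume (Pre r) := hopen.measure_pos volume hne
      have hmeasg : Measurable fun w => f (extMap t w r) := hfmeas.comp (hextr r)
      intro hzero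
      have hsupp : Pre r ⊆ Function.support fun w => f (extMap t w r) := by
        intro w hw
        have hfpos := logNormalDensity_pos m Sig hSig hw
        simp [Function.mem_support, hf_def, ENNReal.ofReal_eq_zero, not_le, hfpos]
      have hpos2 : 0 < (volume.restrict (Pre r)) (Function.support fun w => f (extMap t w r)) := by
        calc 0 < volume (Pre r) := hposvol
          _ = (volume.restrict (Pre r)) (Pre r) := (Measure.restrict_apply_self _ _).symm
          _ ≤ _ := measure_mono hsupp
      exact ((lintegral_pos_iff_support hmeasg).mpr hpos2).ne' hzero
  -- conditional law formula
  have hcond : ∀ (r : ℝ) (A : Set (Fin (n + 1) → ℝ)), MeasurableSet A →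
      condLaw t m Sig τ r A = ρ A r / sDensity t m Sig τ r := by
    intro r A hA
    unfold condLaw
    rw [withDensity_apply _ hA, ← lintegral_indicator hA]
    have hdens : Measurable fun u =>
        (f u / sDensity t m Sig τ r) * (Hset t r).indicator 1 u :=
      (hfmeas.div measurable_const).mul (measurable_one.indicator (measurableSet_Hset t r))
    rw [htau_lint r _ (hdens.indicator hA)]
    have hpt : ∀ w ∈ Pre r,
        A.indicator (fun u => (f u / sDensity t m Sig τ r) * (Hset t r).indicator 1 u)
            (extMap t w r)
          = A.indicator f (extMap t w r) * (sDensity t m Sig τ r)⁻¹ := by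
      intro w hw
      have hH : extMap t w r ∈ Hset t r := ⟨hw, Sdelta_extMap t hdl.ne' w r⟩
      by_cases hwA : extMap t w r ∈ A
      · rw [Set.indicator_of_mem hwA, Set.indicator_of_mem hwA, Set.indicator_of_mem hH,
          Pi.one_apply, mul_one, div_eq_mul_inv]
      · rw [Set.indicator_of_notMem hwA, Set.indicator_of_notMem hwA, zero_mul]
    have hAm : AEMeasurable (fun w : Fin n → ℝ => A.indicator f (extMap t w r))
        (volume.restrict (Pre r)) := ((hindmeas A hA).comp (hextr r)).aemeasurable
    rw [setLIntegral_congr_fun (hPre_meas r) hpt,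
      lintegral_mul_const'' _ hAm, hfull r _ (hind0 A)]
    simp only [hρ_def]
    rw [div_eq_mul_inv, mul_assoc]
  -- the pushforward of S
  have hmapS : Measure.map (fun ω => Sdelta t (U ω)) P
      = volume.withDensity (sDensity t m Sig τ) := by
    have hcomp : (fun ω => Sdelta t (U ω)) = Sdelta t ∘ U := rfl
    rw [hcomp, ← Measure.map_map hSmeas hU, hlaw]
    refine Measure.ext fun B hB => ?_
    rw [Measure.map_apply hSmeas hB, withDensity_apply _ hB]
    have h1 := hmain Set.univ B MeasurableSet.univ hB
    rw [Set.univ_inter] at h1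
    rw [h1]
    exact setLIntegral_congr_fun hB fun r _ => (hs_eq r).symm
  have hρ_le : ∀ (A : Set (Fin (n + 1) → ℝ)) r, ρ A r ≤ sDensity t m Sig τ r := by
    intro A r
    rw [hs_eq r]
    simp only [hρ_def, Set.indicator_univ]
    exact mul_le_mul_right (lintegral_mono fun w => Set.indicator_le_self _ _ _) c
  constructor
  · intro A B hA hB
    have hpair : Measurable fun ω => (U ω, Sdelta t (U ω)) := hU.prodMk (hSmeas.comp hU)
    rw [Measure.map_apply hpair (hA.prod hB)]
    have hpre : (fun ω => (U ω, Sdelta t (U ω))) ⁻¹' (A ×ˢ B)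
        = U ⁻¹' (A ∩ Sdelta t ⁻¹' B) := by
      ext ω; simp [Set.mem_prod, Set.mem_preimage]
    rw [hpre, ← Measure.map_apply hU (hA.inter (hSmeas hB)), hlaw, hmain A B hA hB, hmapS]
    have hRHS : ∫⁻ r in B, condLaw t m Sig τ r A
          ∂(volume.withDensity (sDensity t m Sig τ))
        = ∫⁻ r in B, ρ A r ∂volume := by
      calc ∫⁻ r in B, condLaw t m Sig τ r A ∂(volume.withDensity (sDensity t m Sig τ))
          = ∫⁻ r in B, ρ A r / sDensity t m Sig τ r
              ∂(volume.withDensity (sDensity t m Sig τ)) :=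
            lintegral_congr fun r => hcond r A hA
        _ = ∫⁻ r, ρ A r / sDensity t m Sig τ r
              ∂((volume.restrict B).withDensity (sDensity t m Sig τ)) := by
            rw [restrict_withDensity hB]
        _ = ∫⁻ r in B, sDensity t m Sig τ r * (ρ A r / sDensity t m Sig τ r) ∂volume := by
            rw [lintegral_withDensity_eq_lintegral_mul _ hsmeas (g := fun r => ρ A r / sDensity t m Sig τ r) ((hρmeas A hA).div hsmeas)]
            rfl
        _ = ∫⁻ r in B, ρ A r ∂volume := by
            refine lintegral_congr fun r => ?_
            rcases eq_or_ne (sDensity t m Sig τ r) 0 with h0 | h0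
            · have hz : ρ A r = 0 := le_antisymm ((hρ_le A r).trans_eq h0) zero_le
              simp [h0, hz]
            · rw [mul_comm, ENNReal.div_mul_cancel h0 (hsfin r)]
    exact hRHS.symm
  · intro r hr
    rw [hcond r _ (measurableSet_Hset t r)]
    have hρH : ρ (Hset t r) r = sDensity t m Sig τ r := by
      rw [hs_eq r]
      simp only [hρ_def, Set.indicator_univ]
      congr 1
      refine lintegral_congr fun w => ?_
      by_cases hw : extMap t w r ∈ posOrthant (n + 1)
      · have hmem : extMap t w r ∈ Hset t r := ⟨hw, Sdelta_extMap t hdl.ne' w r⟩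
        rw [Set.indicator_of_mem hmem]
      · rw [Set.indicator_of_notMem (fun h => hw h.1), hf0 _ hw]
    rw [hρH]
    exact ENNReal.div_self (hspos r hr) (hsfin r)
end
end

section
/- Let Σ be a symmetric positive definite k × k matrix, m ∈ ℝ^k, and c ∈ ℝ^k. Let f_U^{(m,Σ)} denote the lognormal density with parameters (m, Σ) and let μ_H be the probability measure on ℝ^k given by μ_H(A) = (1/Z_m) ∫_A f_U^{(m,Σ)}(h) 1_{ℍ_1}(h) dτ_1(h) with Z_m = ∫ f_U^{(m,Σ)} 1_{ℍ_1} dτ_1 (the prior law of the steps heights). Then the posterior measure A ↦ ( ∫_A (∏_{i=1}^k h_i^{c_i}) dμ_H(h) ) / ( ∫_{ℝ^k} (∏_{i=1}^k h_i^{c_i}) dμ_H(h) ) equals the probability measure A ↦ (1/Z_{m*}) ∫_A f_U^{(m*,Σ)}(h) 1_{ℍ_1}(h) dτ_1(h) with m* = m + Σc, i.e. the prior family Δ(m,Σ) is closed under sampling with updated location m* = m + Σc. -/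
open MeasureTheory ENNReal Set Matrix

noncomputable section

/-- The normalizing constant `Z_m = ∫ f_U^{(m,Σ)} 1_{ℍ_1} dτ_1`. -/
def heightsNormalizer {k : ℕ} (t : Fin (k + 1) → ℝ) (m : Fin k → ℝ)
    (Sig : Matrix (Fin k) (Fin k) ℝ) (τ1 : Measure (Fin k → ℝ)) : ℝ≥0∞ :=
  ∫⁻ h, ENNReal.ofReal (logNormalDensity m Sig h) * (Hset t 1).indicator 1 h ∂τ1

/-- The prior law `μ_H(A) = Z_m⁻¹ ∫_A f_U^{(m,Σ)} 1_{ℍ_1} dτ_1` of the steps heights. -/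
def heightsPrior {k : ℕ} (t : Fin (k + 1) → ℝ) (m : Fin k → ℝ)
    (Sig : Matrix (Fin k) (Fin k) ℝ) (τ1 : Measure (Fin k → ℝ)) : Measure (Fin k → ℝ) :=
  (heightsNormalizer t m Sig τ1)⁻¹ •
    τ1.withDensity fun h => ENNReal.ofReal (logNormalDensity m Sig h) * (Hset t 1).indicator 1 h


section Helpers

lemma key_exp {k : ℕ} (Sig : Matrix (Fin k) (Fin k) ℝ) (hSig : Sig.PosDef)
    (m c x : Fin k → ℝ) :
    Real.exp (c ⬝ᵥ x) * Real.exp (-(1/2 : ℝ) * ((x - m) ⬝ᵥ Sig⁻¹ *ᵥ (x - m))) =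
    Real.exp (c ⬝ᵥ m + (1/2 : ℝ) * (c ⬝ᵥ Sig *ᵥ c)) *
      Real.exp (-(1/2 : ℝ) * ((x - (m + Sig *ᵥ c)) ⬝ᵥ Sig⁻¹ *ᵥ (x - (m + Sig *ᵥ c)))) := by
  rw [← Real.exp_add, ← Real.exp_add]
  congr 1
  have hdet : IsUnit Sig.det := isUnit_iff_ne_zero.mpr (ne_of_gt hSig.det_pos)
  have hT : Sigᵀ = Sig := by simpa using hSig.1.eq
  have h1 : Sig⁻¹ *ᵥ (Sig *ᵥ c) = c := by
    rw [Matrix.mulVec_mulVec, Matrix.nonsing_inv_mul _ hdet, Matrix.one_mulVec]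
  have h2 : ∀ w, (Sig *ᵥ c) ⬝ᵥ (Sig⁻¹ *ᵥ w) = c ⬝ᵥ w := by
    intro w
    rw [dotProduct_comm, Matrix.dotProduct_mulVec, ← Matrix.mulVec_transpose, hT,
      Matrix.mulVec_mulVec, Matrix.mul_nonsing_inv _ hdet, Matrix.one_mulVec,
      dotProduct_comm]
  set y := x - m with hy
  set a := Sig *ᵥ c with ha
  have e1 : x - (m + a) = y - a := by rw [hy]; abel
  have expand : (y - a) ⬝ᵥ Sig⁻¹ *ᵥ (y - a)
      = y ⬝ᵥ Sig⁻¹ *ᵥ y - c ⬝ᵥ y - (c ⬝ᵥ y - c ⬝ᵥ a) := by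
    rw [Matrix.mulVec_sub, h1, sub_dotProduct, dotProduct_sub,
      dotProduct_sub, h2, dotProduct_comm y c, dotProduct_comm a c]
  have e2 : c ⬝ᵥ y = c ⬝ᵥ x - c ⬝ᵥ m := dotProduct_sub _ _ _
  rw [e1, expand]
  linarith [e2]

lemma prod_rpow_eq_exp {k : ℕ} (c : Fin k → ℝ) (h : Fin k → ℝ) (hpos : ∀ i, 0 < h i) :
    (∏ i, h i ^ c i) = Real.exp (c ⬝ᵥ fun i => Real.log (h i)) := by
  rw [dotProduct, Real.exp_sum]
  refine Finset.prod_congr rfl fun i _ => ?_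
  rw [Real.rpow_def_of_pos (hpos i), mul_comm]

lemma density_mul_likelihood {k : ℕ} (Sig : Matrix (Fin k) (Fin k) ℝ) (hSig : Sig.PosDef)
    (m c : Fin k → ℝ) (h : Fin k → ℝ) (hpos : ∀ i, 0 < h i) :
    logNormalDensity m Sig h * (∏ i, h i ^ c i) =
      Real.exp (c ⬝ᵥ m + (1/2 : ℝ) * (c ⬝ᵥ Sig *ᵥ c)) *
        logNormalDensity (m + Sig *ᵥ c) Sig h := by
  have hmem : h ∈ posOrthant k := hpos
  unfold logNormalDensity
  rw [Set.indicator_of_mem hmem, Set.indicator_of_mem hmem,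
    prod_rpow_eq_exp c h hpos]
  have := key_exp Sig hSig m c (fun i => Real.log (h i))
  calc (2 * Real.pi) ^ (-(k : ℝ) / 2) * Sig.det ^ (-(1:ℝ) / 2) * (∏ i, (h i)⁻¹) *
        Real.exp (-(1 / 2) * (((fun i => Real.log (h i)) - m) ⬝ᵥ Sig⁻¹ *ᵥ ((fun i => Real.log (h i)) - m))) *
        Real.exp (c ⬝ᵥ fun i => Real.log (h i))
      = (2 * Real.pi) ^ (-(k : ℝ) / 2) * Sig.det ^ (-(1:ℝ) / 2) * (∏ i, (h i)⁻¹) *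
        (Real.exp (c ⬝ᵥ fun i => Real.log (h i)) *
         Real.exp (-(1 / 2) * (((fun i => Real.log (h i)) - m) ⬝ᵥ Sig⁻¹ *ᵥ ((fun i => Real.log (h i)) - m)))) := by
        ring
    _ = _ := by rw [this]; ring

end Helpers

/-- the prior family `Δ(m,Σ)` is closed under sampling: the posterior measure
obtained from the prior `μ_H` and the likelihood `∏ h_i^{c_i}` is the measure of the same
form with updated location `m* = m + Σc`. -/
theorem simple_random_densities_stmt11
    (k : ℕ) (hk : 0 < k) (t : Fin (k + 1) → ℝ) (ht : StrictMono t)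
    (Sig : Matrix (Fin k) (Fin k) ℝ) (hSig : Sig.PosDef)
    (m c : Fin k → ℝ) (τ1 : Measure (Fin k → ℝ))
    (hτ1 : ∀ A : Set (Fin k → ℝ), MeasurableSet A →
      τ1 A = ENNReal.ofReal (dLast hk t)⁻¹ * volume (projFirst '' (A ∩ Hset t 1)))
    (hZ0 : heightsNormalizer t m Sig τ1 ≠ 0)
    (hZtop : heightsNormalizer t m Sig τ1 ≠ ⊤) :
    ∀ A : Set (Fin k → ℝ), MeasurableSet A →
      (∫⁻ h in A, ENNReal.ofReal (∏ i, h i ^ c i) ∂(heightsPrior t m Sig τ1)) /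
          (∫⁻ h, ENNReal.ofReal (∏ i, h i ^ c i) ∂(heightsPrior t m Sig τ1)) =
        (heightsNormalizer t (m + Sig *ᵥ c) Sig τ1)⁻¹ *
          ∫⁻ h in A,
            ENNReal.ofReal (logNormalDensity (m + Sig *ᵥ c) Sig h) *
              (Hset t 1).indicator 1 h ∂τ1 := by
  intro A hA
  set m' := m + Sig *ᵥ c with hm'
  set Kr : ℝ := Real.exp (c ⬝ᵥ m + (1/2 : ℝ) * (c ⬝ᵥ Sig *ᵥ c)) with hKr
  set K : ℝ≥0∞ := ENNReal.ofReal Kr with hKdef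
  have hKne : K ≠ 0 := by
    simp only [hKdef, ne_eq, ENNReal.ofReal_eq_zero, not_le]
    exact Real.exp_pos _
  have hKtop : K ≠ ⊤ := ENNReal.ofReal_ne_top
  have hf1 : Measurable fun h =>
      ENNReal.ofReal (logNormalDensity m Sig h) * (Hset t 1).indicator 1 h :=
    ((measurable_logNormalDensity m Sig).ennreal_ofReal).mul
      (measurable_const.indicator (measurableSet_Hset t 1))
  have hg : Measurable fun h : Fin k → ℝ => ENNReal.ofReal (∏ i, h i ^ c i) := by
    measurability
  have hpt : ∀ h, (ENNReal.ofReal (logNormalDensity m Sig h) * (Hset t 1).indicator 1 h) *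
      ENNReal.ofReal (∏ i, h i ^ c i)
      = K * (ENNReal.ofReal (logNormalDensity m' Sig h) * (Hset t 1).indicator 1 h) := by
    intro h
    by_cases hmem : h ∈ Hset t 1
    · simp only [Set.indicator_of_mem hmem, Pi.one_apply, mul_one]
      rw [← ENNReal.ofReal_mul, density_mul_likelihood Sig hSig m c h hmem.1,
        ENNReal.ofReal_mul (Real.exp_pos _).le]
      unfold logNormalDensity
      apply Set.indicator_nonneg
      intro u hu
      refine mul_nonneg (mul_nonneg (mul_nonneg ?_ ?_) ?_) (Real.exp_nonneg _)
      · exact Real.rpow_nonneg (by positivity) _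
      · exact Real.rpow_nonneg hSig.det_pos.le _
      · exact Finset.prod_nonneg fun i _ => inv_nonneg.mpr (hu i).le
    · rw [Set.indicator_of_notMem hmem, mul_zero, zero_mul, mul_zero, mul_zero]
  have key : ∀ B : Set (Fin k → ℝ), MeasurableSet B →
      (∫⁻ h in B, ENNReal.ofReal (∏ i, h i ^ c i) ∂(heightsPrior t m Sig τ1))
      = (heightsNormalizer t m Sig τ1)⁻¹ *
          (K * ∫⁻ h in B, ENNReal.ofReal (logNormalDensity m' Sig h) *
            (Hset t 1).indicator 1 h ∂τ1) := by
    intro B hB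
    rw [heightsPrior, Measure.restrict_smul, lintegral_smul_measure,
      restrict_withDensity hB, lintegral_withDensity_eq_lintegral_mul _ hf1 hg]
    congr 1
    simp only [Pi.mul_apply]
    rw [lintegral_congr hpt, lintegral_const_mul' _ _ hKtop]
  have keyuniv : (∫⁻ h, ENNReal.ofReal (∏ i, h i ^ c i) ∂(heightsPrior t m Sig τ1))
      = (heightsNormalizer t m Sig τ1)⁻¹ * (K * heightsNormalizer t m' Sig τ1) := by
    rw [← setLIntegral_univ, key univ MeasurableSet.univ, setLIntegral_univ]
    rfl
  rw [key A hA, keyuniv, ← mul_assoc, ← mul_assoc,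
    ENNReal.mul_div_mul_left _ _
      (mul_ne_zero (ENNReal.inv_ne_zero.mpr hZtop) hKne)
      (ENNReal.mul_ne_top (ENNReal.inv_ne_top.mpr hZ0) hKtop),
    ENNReal.div_eq_inv_mul]
end
end
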